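/- arXiv:2505.23790 — 2 statements merged into one kernel-verified Lean document; each statement's English description precedes it below -/
import Mathlib

section
/- (Fano's inequality) Let t be a random variable taking values in a finite set V with |V| ≥ 2, let E be another random variable, and let f be any function of E with error probability P_e = P[f(E) ≠ t]. Then H(t|E) ≤ H_b(P_e) + P_e·log(|V|−1), where H_b(p) = −p log p − (1−p) log(1−p). -/
open Real Finset
open scoped Classical BigOperators

/-- Probability of an event under a pmf `μ` on a finite sample space. -/
noncomputable def pr {Ω : Type*} [Fintype Ω] (μ : Ω → ℝ) (s : Set Ω) : ℝ :=
  ∑ ω, if ω ∈ s then μ ω else 0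

/-- `μ` is a probability mass function on the finite sample space `Ω`. -/
def IsPMF {Ω : Type*} [Fintype Ω] (μ : Ω → ℝ) : Prop :=
  (∀ ω, 0 ≤ μ ω) ∧ ∑ ω, μ ω = 1

/-- Shannon entropy of a discrete random variable `X`. -/
noncomputable def ent {Ω α : Type*} [Fintype Ω] [Fintype α] (μ : Ω → ℝ) (X : Ω → α) : ℝ :=
  ∑ a, Real.negMulLog (pr μ {ω | X ω = a})

/-- Conditional Shannon entropy `H(X|Y) = H(X,Y) - H(Y)`. -/
noncomputable def condEnt {Ω α β : Type*} [Fintype Ω] [Fintype α] [Fintype β]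
    (μ : Ω → ℝ) (X : Ω → α) (Y : Ω → β) : ℝ :=
  ent μ (fun ω => (X ω, Y ω)) - ent μ Y

/-- Mutual information `I(X;Y) = H(X) - H(X|Y)`. -/
noncomputable def mutualInfo {Ω α β : Type*} [Fintype Ω] [Fintype α] [Fintype β]
    (μ : Ω → ℝ) (X : Ω → α) (Y : Ω → β) : ℝ :=
  ent μ X - condEnt μ X Y

/-- Fano's inequality: `H(t|E) ≤ H_b(P_e) + P_e·log(|V|−1)` where
`P_e = P[f(E) ≠ t]`. -/
theorem fano_inequality {Ω V F : Type*} [Fintype Ω] [Fintype V] [Fintype F]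
    (μ : Ω → ℝ) (hμ : IsPMF μ) (hV : 2 ≤ Fintype.card V)
    (t : Ω → V) (E : Ω → F) (f : F → V) :
    condEnt μ t E ≤
      Real.binEntropy (pr μ {ω | f (E ω) ≠ t ω}) +
        pr μ {ω | f (E ω) ≠ t ω} * Real.log (Fintype.card V - 1) := by
  classical
  obtain ⟨hμ0, hμ1⟩ := hμ
  set Pe : ℝ := pr μ {ω | f (E ω) ≠ t ω} with hPe
  set p : V × F → ℝ := fun a => pr μ {ω | (t ω, E ω) = a} with hp
  set pE : F → ℝ := fun e => pr μ {ω | E ω = e} with hpE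
  have hNR : (2 : ℝ) ≤ (Fintype.card V : ℝ) := by exact_mod_cast hV
  have hN1 : (0 : ℝ) < (Fintype.card V : ℝ) - 1 := by linarith
  -- nonnegativity
  have hprn : ∀ s : Set Ω, 0 ≤ pr μ s := by
    intro s
    exact Finset.sum_nonneg fun ω _ => by by_cases h : ω ∈ s <;> simp [pr, h, hμ0 ω]
  have hp0 : ∀ a, 0 ≤ p a := fun a => hprn _
  have hpE0 : ∀ e, 0 ≤ pE e := fun e => hprn _
  -- marginal
  have hmarg : ∀ e, ∑ v, p (v, e) = pE e := by
    intro e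
    simp only [hp, hpE, pr, Set.mem_setOf_eq, Prod.mk.injEq]
    rw [Finset.sum_comm]
    refine Finset.sum_congr rfl fun ω _ => ?_
    by_cases h : E ω = e <;> simp [h]
  -- error probability as a sum over pairs
  have hPesum : ∑ a : V × F, (if a.1 = f a.2 then 0 else p a) = Pe := by
    rw [Fintype.sum_prod_type]
    simp only [hp, hPe, pr, Set.mem_setOf_eq, Prod.mk.injEq]
    have : ∀ v : V, ∑ e : F, (if v = f e then (0:ℝ) else ∑ ω, if t ω = v ∧ E ω = e then μ ω else 0)
        = ∑ e : F, ∑ ω, (if v = f e then (0:ℝ) else if t ω = v ∧ E ω = e then μ ω else 0) := by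
      intro v
      refine Finset.sum_congr rfl fun e _ => ?_
      by_cases h : v = f e <;> simp [h]
    simp only [this]
    rw [show (∑ v : V, ∑ e : F, ∑ ω, if v = f e then (0:ℝ) else if t ω = v ∧ E ω = e then μ ω else 0)
        = ∑ ω, ∑ v : V, ∑ e : F, (if v = f e then (0:ℝ) else if t ω = v ∧ E ω = e then μ ω else 0) by
      rw [show (∑ v : V, ∑ e : F, ∑ ω, if v = f e then (0:ℝ) else if t ω = v ∧ E ω = e then μ ω else 0)
          = ∑ v : V, ∑ ω, ∑ e : F, (if v = f e then (0:ℝ) else if t ω = v ∧ E ω = e then μ ω else 0)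
        from Finset.sum_congr rfl fun v _ => Finset.sum_comm]
      exact Finset.sum_comm]
    refine Finset.sum_congr rfl fun ω _ => ?_
    rw [Finset.sum_eq_single (t ω)]
    · rw [Finset.sum_eq_single (E ω)]
      · by_cases h : t ω = f (E ω)
        · simp [h]
        · simp [h, Ne.symm h]
      · intro e _ he
        have : ¬(E ω = e) := fun h => he h.symm
        simp [this]
      · intro h; exact absurd (Finset.mem_univ _) h
    · intro v _ hv
      have : ¬(t ω = v) := fun h => hv h.symm
      simp [this]
    · intro h; exact absurd (Finset.mem_univ _) h
  -- correct probability
  have hcorrect : ∑ e, p (f e, e) = 1 - Pe := by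
    have h1 : ∑ e, p (f e, e) = ∑ ω, if f (E ω) = t ω then μ ω else 0 := by
      simp only [hp, pr, Set.mem_setOf_eq, Prod.mk.injEq]
      rw [Finset.sum_comm]
      refine Finset.sum_congr rfl fun ω _ => ?_
      rw [Finset.sum_eq_single (E ω)]
      · by_cases h : t ω = f (E ω)
        · simp [h]
        · simp [h, Ne.symm h]
      · intro e _ he
        have : ¬(E ω = e) := fun h => he h.symm
        simp [this]
      · intro h; exact absurd (Finset.mem_univ _) h
    have h2 : (∑ ω, if f (E ω) = t ω then μ ω else 0) + Pe = 1 := by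
      rw [hPe]
      simp only [pr, Set.mem_setOf_eq, ← Finset.sum_add_distrib]
      rw [← hμ1]
      refine Finset.sum_congr rfl fun ω _ => ?_
      by_cases h : f (E ω) = t ω <;> simp [h]
    rw [h1]; linarith
  -- total probability
  have htot : ∑ a : V × F, p a = 1 := by
    simp only [hp, pr, Set.mem_setOf_eq]
    rw [Finset.sum_comm, ← hμ1]
    refine Finset.sum_congr rfl fun ω _ => ?_
    rw [Finset.sum_eq_single ((t ω, E ω) : V × F)]
    · simp
    · intro a _ ha
      have : ¬((t ω, E ω) = a) := fun h => ha h.symm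
      simp [this]
    · intro h; exact absurd (Finset.mem_univ _) h
  have hPe0 : 0 ≤ Pe := hprn _
  have hPe1 : Pe ≤ 1 := by
    have := hcorrect
    have h0 : 0 ≤ ∑ e, p (f e, e) := Finset.sum_nonneg fun e _ => hp0 _
    linarith
  -- conditional entropy formula
  have hcond : condEnt μ t E = ∑ a : V × F, (p a * Real.log (pE a.2) - p a * Real.log (p a)) := by
    have hentE : ent μ E = ∑ a : V × F, (-(p a * Real.log (pE a.2))) := by
      rw [ent, Fintype.sum_prod_type_right]
      refine Finset.sum_congr rfl fun e _ => ?_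
      show Real.negMulLog (pE e) = _
      have hnorm : ∀ x : V, -(p (x, e) * Real.log (pE (x, e).2))
          = -(p (x, e) * Real.log (pE e)) := fun x => rfl
      simp only [hnorm]
      rw [Real.negMulLog, ← hmarg e, neg_mul, Finset.sum_mul, ← Finset.sum_neg_distrib]
    have hentJ : ent μ (fun ω => (t ω, E ω)) = ∑ a : V × F, (-(p a * Real.log (p a))) := by
      rw [ent]
      refine Finset.sum_congr rfl fun a _ => ?_
      show Real.negMulLog (p a) = _
      rw [Real.negMulLog, neg_mul]
    rw [condEnt, hentJ, hentE, ← Finset.sum_sub_distrib]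
    refine Finset.sum_congr rfl fun a _ => by ring
  -- the auxiliary distribution q
  set q : V × F → ℝ := fun a => if a.1 = f a.2 then 1 - Pe else Pe / ((Fintype.card V : ℝ) - 1)
    with hq
  have hq0 : ∀ a, 0 ≤ q a := by
    intro a
    simp only [hq]
    by_cases h : a.1 = f a.2
    · rw [if_pos h]; linarith
    · rw [if_neg h]; positivity
  -- p a log (q a) sums
  have hlogq : ∑ a : V × F, p a * Real.log (q a)
      = (1 - Pe) * Real.log (1 - Pe) + Pe * Real.log (Pe / ((Fintype.card V : ℝ) - 1)) := by
    have : ∀ a : V × F, p a * Real.log (q a)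
        = (if a.1 = f a.2 then p a else 0) * Real.log (1 - Pe)
          + (if a.1 = f a.2 then 0 else p a) * Real.log (Pe / ((Fintype.card V : ℝ) - 1)) := by
      intro a
      rw [hq]
      by_cases h : a.1 = f a.2 <;> simp [h]
    simp only [this]
    rw [Finset.sum_add_distrib, ← Finset.sum_mul, ← Finset.sum_mul, hPesum]
    congr 2
    rw [← hcorrect, Fintype.sum_prod_type_right]
    refine Finset.sum_congr rfl fun e _ => ?_
    rw [Finset.sum_eq_single (f e)]
    · simp
    · intro v _ hv; simp [hv]
    · intro h; exact absurd (Finset.mem_univ _) h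
  -- sum of q against the marginal
  have hqsum : ∑ a : V × F, q a * pE a.2 = 1 := by
    rw [Fintype.sum_prod_type_right]
    have : ∀ e : F, ∑ v : V, q (v, e) * pE e = pE e := by
      intro e
      rw [← Finset.sum_mul]
      have : ∑ v : V, q (v, e) = 1 := by
        simp only [hq]
        have h1 : ∀ v : V, (if v = f e then 1 - Pe else Pe / ((Fintype.card V : ℝ) - 1))
            = (if v = f e then (1 - Pe) - Pe / ((Fintype.card V : ℝ) - 1) else 0)
              + Pe / ((Fintype.card V : ℝ) - 1) := by
          intro v; by_cases h : v = f e <;> simp [h]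
        simp only [h1]
        rw [Finset.sum_add_distrib,
          Finset.sum_ite_eq' Finset.univ (f e)
            (fun _ => (1 - Pe) - Pe / ((Fintype.card V : ℝ) - 1)),
          Finset.sum_const, Finset.card_univ, nsmul_eq_mul, if_pos (Finset.mem_univ _)]
        field_simp
        ring
      rw [this, one_mul]
    simp only [this]
    rw [show ∑ e, pE e = 1 by
      rw [← htot, Fintype.sum_prod_type_right]
      exact (Finset.sum_congr rfl fun e _ => (hmarg e).symm)]
  -- Gibbs termwise inequality
  have hkey : ∀ a : V × F,
      p a * Real.log (pE a.2) - p a * Real.log (p a) + p a * Real.log (q a)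
        ≤ q a * pE a.2 - p a := by
    intro a
    by_cases hpa : p a = 0
    · rw [hpa]
      nlinarith [mul_nonneg (hq0 a) (hpE0 a.2)]
    · have hpa' : 0 < p a := lt_of_le_of_ne (hp0 a) (Ne.symm hpa)
      have hpEpos : 0 < pE a.2 := by
        rw [← hmarg a.2]
        calc 0 < p a := hpa'
        _ = p (a.1, a.2) := by rw [Prod.mk.eta]
        _ ≤ ∑ v, p (v, a.2) :=
            Finset.single_le_sum (f := fun v => p (v, a.2)) (fun v _ => hp0 _)
              (Finset.mem_univ a.1)
      have hqpos : 0 < q a := by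
        simp only [hq]
        by_cases h : a.1 = f a.2
        · rw [if_pos h]
          have hle : p a ≤ ∑ e, p (f e, e) := by
            have hpa2 : p a = p (f a.2, a.2) := by rw [← h, Prod.mk.eta]
            rw [hpa2]
            exact Finset.single_le_sum (f := fun e => p (f e, e)) (fun e _ => hp0 _)
              (Finset.mem_univ a.2)
          rw [hcorrect] at hle
          linarith
        · rw [if_neg h]
          have : p a ≤ Pe := by
            rw [← hPesum]
            calc p a = (if a.1 = f a.2 then 0 else p a) := by rw [if_neg h]
            _ ≤ ∑ b : V × F, (if b.1 = f b.2 then 0 else p b) :=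
                Finset.single_le_sum
                  (f := fun b : V × F => if b.1 = f b.2 then (0:ℝ) else p b)
                  (fun b _ => by by_cases hb : b.1 = f b.2 <;> simp [hb, hp0 b])
                  (Finset.mem_univ a)
          exact div_pos (lt_of_lt_of_le hpa' this) hN1
      have hlog : Real.log (pE a.2) - Real.log (p a) + Real.log (q a)
          = Real.log (q a * pE a.2 / p a) := by
        rw [Real.log_div (by positivity) (ne_of_gt hpa'), Real.log_mul (ne_of_gt hqpos)
          (ne_of_gt hpEpos)]
        ring
      calc p a * Real.log (pE a.2) - p a * Real.log (p a) + p a * Real.log (q a)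
          = p a * Real.log (q a * pE a.2 / p a) := by rw [← hlog]; ring
        _ ≤ p a * (q a * pE a.2 / p a - 1) := by
            refine mul_le_mul_of_nonneg_left ?_ (le_of_lt hpa')
            exact Real.log_le_sub_one_of_pos (by positivity)
        _ = q a * pE a.2 - p a := by field_simp
  -- sum up
  have hsum : ∑ a : V × F, (p a * Real.log (pE a.2) - p a * Real.log (p a))
      + ∑ a : V × F, p a * Real.log (q a) ≤ 0 := by
    rw [← Finset.sum_add_distrib]
    calc ∑ a : V × F, (p a * Real.log (pE a.2) - p a * Real.log (p a) + p a * Real.log (q a))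
        ≤ ∑ a : V × F, (q a * pE a.2 - p a) := Finset.sum_le_sum fun a _ => hkey a
      _ = 0 := by rw [Finset.sum_sub_distrib, hqsum, htot]; ring
  -- conclude
  rw [hcond]
  have hfinal : Pe * Real.log (Pe / ((Fintype.card V : ℝ) - 1))
      = Pe * Real.log Pe - Pe * Real.log ((Fintype.card V : ℝ) - 1) := by
    by_cases h : Pe = 0
    · simp [h]
    · rw [Real.log_div h (ne_of_gt hN1)]; ring
  rw [Real.binEntropy_eq_negMulLog_add_negMulLog_one_sub, Real.negMulLog, Real.negMulLog]
  rw [hlogq, hfinal] at hsum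
  nlinarith [hsum]
end

section
/- Let t_1,...,t_n each be uniformly distributed on a finite vocabulary V with |V| ≥ 2, let E be a random variable, and let f be any estimator outputting a tuple in V^n. With P_rec = (1/n)Σ_{i=1}^n P[f(E)_i = t_i], the average token-level mutual information satisfies (1/n)Σ_{i=1}^n I(t_i;E) ≥ P_rec·log(|V|−1) − H_b(P_rec). -/
open Real Finset
open scoped Classical BigOperators

lemma pr_nonneg {Ω : Type*} [Fintype Ω] {μ : Ω → ℝ} (hμ : IsPMF μ) (s : Set Ω) :
    0 ≤ pr μ s :=
  Finset.sum_nonneg fun ω _ => by split <;> simp [hμ.1 ω]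

lemma pr_le_one {Ω : Type*} [Fintype Ω] {μ : Ω → ℝ} (hμ : IsPMF μ) (s : Set Ω) :
    pr μ s ≤ 1 := by
  rw [← hμ.2]
  exact Finset.sum_le_sum fun ω _ => by split <;> simp [hμ.1 ω]

/-- Maximal-entropy bound for a nonnegative vector: `∑ negMulLog a ≤ negMulLog T + T log k`. -/
lemma sum_negMulLog_le {ι : Type*} (S : Finset ι) (a : ι → ℝ) (ha : ∀ i ∈ S, 0 ≤ a i) :
    ∑ i ∈ S, negMulLog (a i) ≤ negMulLog (∑ i ∈ S, a i) + (∑ i ∈ S, a i) * Real.log S.card := by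
  rcases S.eq_empty_or_nonempty with rfl | hS
  · simp
  have hk : (0 : ℝ) < S.card := by exact_mod_cast Finset.card_pos.mpr hS
  set T := ∑ i ∈ S, a i with hT
  have hjen := concaveOn_negMulLog.le_map_sum (t := S) (w := fun _ => (S.card : ℝ)⁻¹)
    (p := a) (fun i _ => by positivity)
    (by rw [Finset.sum_const, nsmul_eq_mul]; field_simp)
    (fun i hi => Set.mem_Ici.2 (ha i hi))
  simp only [smul_eq_mul, ← Finset.mul_sum] at hjen
  have h3 : ∑ i ∈ S, negMulLog (a i) ≤ (S.card : ℝ) * negMulLog ((S.card : ℝ)⁻¹ * T) := by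
    calc ∑ i ∈ S, negMulLog (a i)
        = (S.card : ℝ) * ((S.card : ℝ)⁻¹ * ∑ i ∈ S, negMulLog (a i)) := by field_simp
      _ ≤ (S.card : ℝ) * negMulLog ((S.card : ℝ)⁻¹ * T) := by
          exact mul_le_mul_of_nonneg_left hjen (le_of_lt hk)
  refine h3.trans_eq ?_
  rcases eq_or_lt_of_le (Finset.sum_nonneg ha) with h0 | h0
  · rw [show T = 0 from h0.symm]; simp
  · rw [negMulLog, negMulLog, Real.log_mul (by positivity) (ne_of_gt h0),
      Real.log_inv, ← hT]
    field_simp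
    ring

/-- Perspective identity: `s * binEntropy (b/s) = negMulLog b + negMulLog (s-b) - negMulLog s`. -/
lemma perspective_binEntropy {s b : ℝ} (hs : 0 < s) (hb : 0 ≤ b) (hbs : b ≤ s) :
    s * binEntropy (b / s) = negMulLog b + negMulLog (s - b) - negMulLog s := by
  rcases eq_or_lt_of_le hb with rfl | hb0
  · simp [binEntropy]
  rcases eq_or_lt_of_le hbs with rfl | hbs0
  · simp [binEntropy, div_self (ne_of_gt hs)]
  have h1 : 1 - b / s = (s - b) / s := by field_simp
  rw [binEntropy_eq_negMulLog_add_negMulLog_one_sub, h1, negMulLog, negMulLog,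
    Real.log_div (ne_of_gt hb0) (ne_of_gt hs),
    Real.log_div (by linarith) (ne_of_gt hs), negMulLog, negMulLog, negMulLog]
  field_simp
  ring

/-- Fano's inequality (per token). -/
lemma fano_condEnt {Ω V F : Type*} [Fintype Ω] [Fintype V] [Fintype F]
    (μ : Ω → ℝ) (hμ : IsPMF μ) (hV : 2 ≤ Fintype.card V)
    (X : Ω → V) (E : Ω → F) (g : F → V) :
    condEnt μ X E ≤ binEntropy (pr μ {ω | g (E ω) = X ω})
      + (1 - pr μ {ω | g (E ω) = X ω}) * Real.log (Fintype.card V - 1) := by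
  set m := Fintype.card V with hm
  set j : V → F → ℝ := fun x e => pr μ {ω | X ω = x ∧ E ω = e} with hj
  set s : F → ℝ := fun e => pr μ {ω | E ω = e} with hsdef
  set b : F → ℝ := fun e => j (g e) e with hbdef
  set p : ℝ := pr μ {ω | g (E ω) = X ω} with hpdef
  have hjnn : ∀ x e, 0 ≤ j x e := fun x e => pr_nonneg hμ _
  have hs_eq : ∀ e, s e = ∑ x, j x e := by
    intro e
    simp only [hsdef, hj, pr]
    rw [Finset.sum_comm]
    refine Finset.sum_congr rfl fun ω _ => ?_
    rcases eq_or_ne (E ω) e with he | he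
    · rw [Finset.sum_eq_single (X ω)]
      · simp [he]
      · intro x _ hx
        simp [Ne.symm hx]
      · simp
    · simp [he]
  have hsnn : ∀ e, 0 ≤ s e := fun e => pr_nonneg hμ _
  have hbnn : ∀ e, 0 ≤ b e := fun e => hjnn _ _
  have hbs : ∀ e, b e ≤ s e := by
    intro e
    rw [hs_eq e]
    exact Finset.single_le_sum (fun x _ => hjnn x e) (Finset.mem_univ (g e))
  have hsum1 : ∑ e, s e = 1 := by
    simp only [hsdef, pr]
    rw [Finset.sum_comm, ← hμ.2]
    refine Finset.sum_congr rfl fun ω _ => ?_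
    rw [Finset.sum_eq_single (E ω)]
    · simp
    · intro e _ he
      simp [Ne.symm he]
    · simp
  have hp_eq : p = ∑ e, b e := by
    simp only [hpdef, hbdef, hj, pr]
    rw [Finset.sum_comm]
    refine Finset.sum_congr rfl fun ω _ => ?_
    rw [Finset.sum_eq_single (E ω)]
    · simp [eq_comm]
    · intro e _ he
      have : ¬(X ω = g e ∧ E ω = e) := fun h => he h.2.symm
      simp [this]
    · simp
  -- rewrite condEnt
  have hcond : condEnt μ X E = ∑ e, ((∑ x, negMulLog (j x e)) - negMulLog (s e)) := by
    rw [condEnt, ent, ent, Fintype.sum_prod_type, Finset.sum_comm,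
      Finset.sum_sub_distrib]
    congr 1
    refine Finset.sum_congr rfl fun e _ => Finset.sum_congr rfl fun x _ => ?_
    congr 1
    simp [hj, Prod.ext_iff]
  have hm1 : (1:ℝ) ≤ (m:ℝ) - 1 := by
    have : (2:ℝ) ≤ m := by exact_mod_cast hV
    linarith
  -- per-e bound
  have hper : ∀ e, (∑ x, negMulLog (j x e)) - negMulLog (s e) ≤
      (negMulLog (b e) + negMulLog (s e - b e) - negMulLog (s e))
        + (s e - b e) * Real.log ((m:ℝ) - 1) := by
    intro e
    have hcard : ((Finset.univ.erase (g e)).card : ℝ) = (m:ℝ) - 1 := by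
      rw [Finset.card_erase_of_mem (Finset.mem_univ _), Finset.card_univ]
      have h1 : 1 ≤ Fintype.card V := by omega
      rw [Nat.cast_sub h1, Nat.cast_one]
    have hsplit : ∑ x, negMulLog (j x e)
        = negMulLog (b e) + ∑ x ∈ Finset.univ.erase (g e), negMulLog (j x e) := by
      rw [← Finset.add_sum_erase _ _ (Finset.mem_univ (g e))]
    have hsum_erase : ∑ x ∈ Finset.univ.erase (g e), j x e = s e - b e := by
      rw [hs_eq e, ← Finset.add_sum_erase _ (fun x => j x e) (Finset.mem_univ (g e))]
      ring
    have := sum_negMulLog_le (Finset.univ.erase (g e)) (fun x => j x e)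
      (fun x _ => hjnn x e)
    rw [hsum_erase, hcard] at this
    rw [hsplit]
    linarith
  -- sum of phi ≤ binEntropy p
  have hphi : ∑ e, (negMulLog (b e) + negMulLog (s e - b e) - negMulLog (s e))
      ≤ binEntropy p := by
    set T : Finset F := Finset.univ.filter (fun e => s e ≠ 0) with hT
    have hzero : ∀ e, s e = 0 → b e = 0 := fun e h =>
      le_antisymm (h ▸ hbs e) (hbnn e)
    have hside : ∀ e ∈ Finset.univ (α := F),
        (negMulLog (b e) + negMulLog (s e - b e) - negMulLog (s e)) ≠ 0 → s e ≠ 0 := by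
      intro e _ hne hs0
      apply hne
      rw [hs0, hzero e hs0]
      simp
    have hstep : ∑ e, (negMulLog (b e) + negMulLog (s e - b e) - negMulLog (s e))
        = ∑ e ∈ T, s e • binEntropy (b e / s e) := by
      rw [← Finset.sum_filter_of_ne hside]
      refine Finset.sum_congr rfl fun e he => ?_
      have hse : 0 < s e := lt_of_le_of_ne (hsnn e) (Ne.symm (Finset.mem_filter.1 he).2)
      rw [smul_eq_mul, perspective_binEntropy hse (hbnn e) (hbs e)]
    rw [hstep]
    have hw1 : ∑ e ∈ T, s e = 1 := by
      rw [← hsum1]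
      exact Finset.sum_filter_of_ne fun e _ h => h
    have hjen := strictConcave_binEntropy.concaveOn.le_map_sum (t := T)
      (w := fun e => s e) (p := fun e => b e / s e)
      (fun e _ => hsnn e) hw1 ?_
    · have harg : ∑ e ∈ T, s e • (b e / s e) = p := by
        rw [hp_eq]
        rw [← Finset.sum_filter_of_ne (s := Finset.univ) (f := b)
          (p := fun e => s e ≠ 0) (fun e _ h h0 => h (hzero e h0))]
        refine Finset.sum_congr rfl fun e he => ?_
        have hse : s e ≠ 0 := (Finset.mem_filter.1 he).2
        rw [smul_eq_mul, mul_div_cancel₀ _ hse]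
      rw [harg] at hjen
      exact hjen
    · intro e he
      have hse : 0 < s e := lt_of_le_of_ne (hsnn e) (Ne.symm (Finset.mem_filter.1 he).2)
      exact Set.mem_Icc.2 ⟨div_nonneg (hbnn e) (hsnn e), (div_le_one hse).2 (hbs e)⟩
  -- combine
  have hbig : condEnt μ X E ≤ binEntropy p + ∑ e, (s e - b e) * Real.log ((m:ℝ) - 1) := by
    rw [hcond]
    calc ∑ e, ((∑ x, negMulLog (j x e)) - negMulLog (s e))
        ≤ ∑ e, ((negMulLog (b e) + negMulLog (s e - b e) - negMulLog (s e))
            + (s e - b e) * Real.log ((m:ℝ) - 1)) :=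
          Finset.sum_le_sum fun e _ => hper e
      _ = (∑ e, (negMulLog (b e) + negMulLog (s e - b e) - negMulLog (s e)))
            + ∑ e, (s e - b e) * Real.log ((m:ℝ) - 1) := Finset.sum_add_distrib
      _ ≤ binEntropy p + ∑ e, (s e - b e) * Real.log ((m:ℝ) - 1) := by linarith
  have hlast : ∑ e, (s e - b e) * Real.log ((m:ℝ) - 1)
      = (1 - p) * Real.log ((m:ℝ) - 1) := by
    rw [← Finset.sum_mul, Finset.sum_sub_distrib, hsum1, ← hp_eq]
  rw [hlast] at hbig
  exact hbig

/-- Token-level recoverability bound: with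
`P_rec = (1/n)Σ_i P[f(E)_i = t_i]`, the average token-level MI satisfies
`(1/n)Σ_i I(t_i;E) ≥ P_rec·log(|V|−1) − H_b(P_rec)`. -/
theorem avg_mi_ge_recoverability_bound {Ω V F : Type*} [Fintype Ω] [Fintype V] [Fintype F]
    {n : ℕ} (hn : 0 < n) (μ : Ω → ℝ) (hμ : IsPMF μ) (hV : 2 ≤ Fintype.card V)
    (t : Fin n → Ω → V)
    (hunif : ∀ i, ∀ v : V, pr μ {ω | t i ω = v} = 1 / Fintype.card V)
    (E : Ω → F) (f : F → (Fin n → V)) :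
    (1 / (n : ℝ)) * ∑ i, mutualInfo μ (t i) E ≥
      ((1 / (n : ℝ)) * ∑ i, pr μ {ω | f (E ω) i = t i ω}) * Real.log (Fintype.card V - 1)
        - Real.binEntropy ((1 / (n : ℝ)) * ∑ i, pr μ {ω | f (E ω) i = t i ω}) := by
  have hm2 : (2:ℝ) ≤ (Fintype.card V : ℝ) := by exact_mod_cast hV
  set m := Fintype.card V with hm
  set L := Real.log ((m:ℝ) - 1) with hL
  set p : Fin n → ℝ := fun i => pr μ {ω | f (E ω) i = t i ω} with hp
  have hp0 : ∀ i, 0 ≤ p i := fun i => pr_nonneg hμ _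
  have hp1 : ∀ i, p i ≤ 1 := fun i => pr_le_one hμ _
  have hent : ∀ i, ent μ (t i) = Real.log m := by
    intro i
    rw [ent]
    simp only [hunif i]
    rw [Finset.sum_const, Finset.card_univ, nsmul_eq_mul, negMulLog, one_div,
      Real.log_inv, ← hm]
    have hm0 : (0:ℝ) < m := by linarith
    field_simp
  have hmlog : L ≤ Real.log m :=
    Real.log_le_log (by linarith) (by linarith)
  have hi : ∀ i, p i * L - binEntropy (p i) ≤ mutualInfo μ (t i) E := by
    intro i
    have hf := fano_condEnt μ hμ hV (t i) E (fun e => f e i)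
    rw [mutualInfo, hent i]
    have hexp : (1 - p i) * L = L - p i * L := by ring
    have hpi : pr μ {ω | f (E ω) i = t i ω} = p i := rfl
    rw [hpi] at hf
    linarith [hf, hmlog, hexp]
  have hsum : ∑ i, (p i * L - binEntropy (p i)) ≤ ∑ i, mutualInfo μ (t i) E :=
    Finset.sum_le_sum fun i _ => hi i
  have hnpos : (0:ℝ) < n := by exact_mod_cast hn
  have hjen := strictConcave_binEntropy.concaveOn.le_map_sum (t := Finset.univ)
    (w := fun _ : Fin n => 1 / (n:ℝ)) (p := p)
    (fun i _ => by positivity)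
    (by rw [Finset.sum_const, Finset.card_univ, Fintype.card_fin, nsmul_eq_mul]; field_simp)
    (fun i _ => Set.mem_Icc.2 ⟨hp0 i, hp1 i⟩)
  simp only [smul_eq_mul] at hjen
  have e1 : (1/(n:ℝ)) * ∑ i, binEntropy (p i) = ∑ i, (1/(n:ℝ)) * binEntropy (p i) :=
    Finset.mul_sum _ _ _
  have e2 : (1/(n:ℝ)) * ∑ i, p i = ∑ i, (1/(n:ℝ)) * p i := Finset.mul_sum _ _ _
  have e3 : (1/(n:ℝ)) * ∑ i, (p i * L - binEntropy (p i))
      = ((1/(n:ℝ)) * ∑ i, p i) * L - (1/(n:ℝ)) * ∑ i, binEntropy (p i) := by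
    rw [Finset.sum_sub_distrib, ← Finset.sum_mul]
    ring
  have h4 : (1/(n:ℝ)) * ∑ i, (p i * L - binEntropy (p i))
      ≤ (1/(n:ℝ)) * ∑ i, mutualInfo μ (t i) E :=
    mul_le_mul_of_nonneg_left hsum (by positivity)
  have h5 : binEntropy (∑ i, 1/(n:ℝ) * p i) = binEntropy ((1/(n:ℝ)) * ∑ i, p i) := by
    rw [e2]
  rw [ge_iff_le]
  linarith [hjen, e1, e2, e3, h4, h5]
end
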